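/- arXiv:2111.09069 — 2 statements merged into one kernel-verified Lean document; each statement's English description precedes it below -/
import Mathlib

section
/- Let λ > 1 and δ > 0, and consider the two curves Q(η) (concave: Q'' < 0 on η < 0, Q decreasing) and R_δ(η) = (1/√λ)·√(η² + δ(λ-1)) (strictly convex in η). Suppose that for some δ* > 0 and η* < 0 one has Q(η*) = R_{δ*}(η*) and Q'(η*) = R_{δ*}'(η*). Then the pair (η*, δ*) is the unique solution of this tangency system among η < 0 and δ > 0, η* is the unique solution of λ·Q(η)·Q'(η) = η, and δ* = (λ·Q(η*)² - η*²)/(λ - 1). -/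
open Real Set

/-- Core hyperbola inequality: strict version of `ab + m < √(a²+m)·√(b²+m)`. -/
lemma snt_core (m a b : ℝ) (hm : 0 < m) (hab : a ≠ b) :
    a * b + m < Real.sqrt (a ^ 2 + m) * Real.sqrt (b ^ 2 + m) := by
  have hA : 0 < Real.sqrt (a ^ 2 + m) := Real.sqrt_pos.2 (by positivity)
  have hB : 0 < Real.sqrt (b ^ 2 + m) := Real.sqrt_pos.2 (by positivity)
  have hA2 : Real.sqrt (a ^ 2 + m) ^ 2 = a ^ 2 + m := Real.sq_sqrt (by positivity)
  have hB2 : Real.sqrt (b ^ 2 + m) ^ 2 = b ^ 2 + m := Real.sq_sqrt (by positivity)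
  have hab' : (0:ℝ) < (a - b) ^ 2 := by
    have := sub_ne_zero.mpr hab
    positivity
  nlinarith [mul_pos hA hB, mul_pos hm hab',
    sq_nonneg (Real.sqrt (a ^ 2 + m) * Real.sqrt (b ^ 2 + m) + (a * b + m)),
    sq_nonneg (Real.sqrt (a ^ 2 + m) * Real.sqrt (b ^ 2 + m) - (a * b + m))]

/-- Strict tangent-line-above inequality for a strictly concave `Q` on the negative reals. -/
lemma snt_tangent (Q Q' Q'' : ℝ → ℝ)
    (hQd : ∀ η : ℝ, η < 0 → HasDerivAt Q (Q' η) η)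
    (hQd' : ∀ η : ℝ, η < 0 → HasDerivAt Q' (Q'' η) η)
    (hQ''neg : ∀ η : ℝ, η < 0 → Q'' η < 0)
    {a b : ℝ} (ha : a < 0) (hb : b < 0) (hab : a ≠ b) :
    Q b < Q a + Q' a * (b - a) := by
  have hanti : StrictAntiOn Q' (Iio 0) := by
    apply strictAntiOn_of_deriv_neg (convex_Iio 0)
    · exact fun x hx => (hQd' x hx).continuousAt.continuousWithinAt
    · intro x hx
      rw [interior_Iio] at hx
      rw [(hQd' x hx).deriv]
      exact hQ''neg x hx
  rcases lt_or_gt_of_ne hab with h | h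
  · obtain ⟨c, hc, hcs⟩ := exists_hasDerivAt_eq_slope Q Q' h
      (fun x hx => (hQd x (lt_of_le_of_lt hx.2 hb)).continuousAt.continuousWithinAt)
      (fun x hx => hQd x (lt_trans hx.2 hb))
    have hc0 : c < 0 := lt_trans hc.2 hb
    have hlt : Q' c < Q' a := hanti ha hc0 hc.1
    have hpos : (0:ℝ) < b - a := by linarith
    have := hcs
    rw [eq_div_iff hpos.ne'] at this
    nlinarith [mul_lt_mul_of_pos_right hlt hpos]
  · obtain ⟨c, hc, hcs⟩ := exists_hasDerivAt_eq_slope Q Q' h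
      (fun x hx => (hQd x (lt_of_le_of_lt hx.2 ha)).continuousAt.continuousWithinAt)
      (fun x hx => hQd x (lt_trans hx.2 ha))
    have hc0 : c < 0 := lt_trans hc.2 ha
    have hlt : Q' a < Q' c := hanti hc0 ha hc.2
    have hpos : (0:ℝ) < a - b := by linarith
    have := hcs
    rw [eq_div_iff (by linarith : a - b ≠ 0)] at this
    nlinarith [mul_lt_mul_of_pos_right hlt hpos]

lemma snt_rootid (l sl T x : ℝ) (hsl : sl ≠ 0) (hT : T ≠ 0) (h2 : sl ^ 2 = l) :
    l * (1 / sl * T) * (x / (sl * T)) = x := by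
  rw [← h2]; field_simp

lemma snt_tangentline (sl S M ηs η1 : ℝ) (hsl : sl ≠ 0) (hS : S ≠ 0)
    (h2 : S ^ 2 = ηs ^ 2 + M) :
    1 / sl * S + ηs / (sl * S) * (η1 - ηs) = (M + ηs * η1) / (sl * S) := by
  rw [eq_div_iff (mul_ne_zero hsl hS)]
  field_simp
  linear_combination h2

lemma snt_sq (l sl S : ℝ) (hsl : sl ≠ 0) (h2 : sl ^ 2 = l) :
    l * (1 / sl * S) ^ 2 = S ^ 2 := by
  rw [← h2]; field_simp

set_option maxHeartbeats 1000000 in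
/-- Tangency between a concave decreasing positive curve `Q` and the convex family
`R_δ(η) = (1/√λ)√(η² + δ(λ-1))`, `λ > 1`: if `(η*, δ*)` is a tangency point (equal values
and equal derivatives) with `η* < 0`, `δ* > 0`, then it is the unique such tangency,
`η*` is the unique solution of `λ·Q(η)·Q'(η) = η` among `η < 0`, and
`δ* = (λ·Q(η*)² - η*²)/(λ-1)`. -/
theorem saddle_node_tangency_unique
    (l : ℝ) (hl : 1 < l) (Q Q' Q'' : ℝ → ℝ)
    (hQd : ∀ η : ℝ, η < 0 → HasDerivAt Q (Q' η) η)
    (hQd' : ∀ η : ℝ, η < 0 → HasDerivAt Q' (Q'' η) η)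
    (hQpos : ∀ η : ℝ, η < 0 → 0 < Q η)
    (hQ'neg : ∀ η : ℝ, η < 0 → Q' η < 0)
    (hQ''neg : ∀ η : ℝ, η < 0 → Q'' η < 0)
    (ηs δs : ℝ) (hηs : ηs < 0) (hδs : 0 < δs)
    (hval : Q ηs = (1 / Real.sqrt l) * Real.sqrt (ηs^2 + δs * (l - 1)))
    (hder : Q' ηs = ηs / (Real.sqrt l * Real.sqrt (ηs^2 + δs * (l - 1)))) :
    (∀ η δ : ℝ, η < 0 → 0 < δ →
      Q η = (1 / Real.sqrt l) * Real.sqrt (η^2 + δ * (l - 1)) →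
      Q' η = η / (Real.sqrt l * Real.sqrt (η^2 + δ * (l - 1))) →
      η = ηs ∧ δ = δs)
    ∧ (l * Q ηs * Q' ηs = ηs
        ∧ ∀ η : ℝ, η < 0 → l * Q η * Q' η = η → η = ηs)
    ∧ δs = (l * (Q ηs)^2 - ηs^2) / (l - 1) := by
  have hlpos : (0:ℝ) < l := by linarith
  have hl1 : (0:ℝ) < l - 1 := by linarith
  have hslpos : 0 < Real.sqrt l := Real.sqrt_pos.2 hlpos
  have hsl2 : Real.sqrt l ^ 2 = l := Real.sq_sqrt hlpos.le
  set sl := Real.sqrt l with hsldef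
  set M := δs * (l - 1) with hMdef
  have hM : 0 < M := mul_pos hδs hl1
  set S := Real.sqrt (ηs ^ 2 + M) with hSdef
  have hS : 0 < S := Real.sqrt_pos.2 (by positivity)
  have hS2 : S ^ 2 = ηs ^ 2 + M := Real.sq_sqrt (by positivity)
  have hS2' : S ^ 2 = ηs ^ 2 + δs * (l - 1) := by rw [hS2, hMdef]
  clear_value sl M S
  -- the root identity at ηs
  have hroot_s : l * Q ηs * Q' ηs = ηs := by
    rw [hval, hder]
    exact snt_rootid l sl S ηs hslpos.ne' hS.ne' hsl2
  -- uniqueness of the root of l·Q·Q' = η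
  have key : ∀ η : ℝ, η < 0 → l * Q η * Q' η = η → η = ηs := by
    intro η1 hη1 hroot
    by_contra hne
    have hq : 0 < Q η1 := hQpos η1 hη1
    set q := Q η1 with hqdef
    have hlq : (0:ℝ) < l * q := by positivity
    have hb : Q' η1 = η1 / (l * q) := by
      rw [eq_div_iff hlq.ne']
      linear_combination hroot
    -- the tangent at ηs lies above Q at η1 and below the hyperbola: l·q² < η1² + M
    have hA2 : Q η1 < Q ηs + Q' ηs * (η1 - ηs) :=
      snt_tangent Q Q' Q'' hQd hQd' hQ''neg hηs hη1 (fun h => hne (by rw [h]))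
    have hS1 : 0 < Real.sqrt (η1 ^ 2 + M) := Real.sqrt_pos.2 (by positivity)
    have hS12 : Real.sqrt (η1 ^ 2 + M) ^ 2 = η1 ^ 2 + M := Real.sq_sqrt (by positivity)
    have hcore2 : ηs * η1 + M < S * Real.sqrt (η1 ^ 2 + M) := by
      have := snt_core M ηs η1 hM (fun h => hne (by rw [h]))
      rw [← hSdef] at this
      exact this
    have he : Q ηs + Q' ηs * (η1 - ηs) = (M + ηs * η1) / (sl * S) := by
      rw [hval, hder]
      exact snt_tangentline sl S M ηs η1 hslpos.ne' hS.ne' hS2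
    rw [he] at hA2
    have h3 : q * (sl * S) < M + ηs * η1 := (lt_div_iff₀ (mul_pos hslpos hS)).mp hA2
    have h4 : q * sl * S < Real.sqrt (η1 ^ 2 + M) * S := by
      have e3 : q * sl * S = q * (sl * S) := by ring
      have e4 : S * Real.sqrt (η1 ^ 2 + M) = Real.sqrt (η1 ^ 2 + M) * S := by ring
      rw [e3, ← e4]
      linarith [h3, hcore2]
    have h2' : q * sl < Real.sqrt (η1 ^ 2 + M) := lt_of_mul_lt_mul_right h4 hS.le
    have hcM : l * q ^ 2 < η1 ^ 2 + M := by
      have h10 := mul_self_lt_mul_self (by positivity : (0:ℝ) ≤ q * sl) h2'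
      calc l * q ^ 2 = (q * sl) * (q * sl) := by rw [← hsl2]; ring
        _ < Real.sqrt (η1 ^ 2 + M) * Real.sqrt (η1 ^ 2 + M) := h10
        _ = η1 ^ 2 + M := Real.mul_self_sqrt (by positivity)
    -- the tangent at η1 lies above Q at ηs
    have hA1 : Q ηs < Q η1 + Q' η1 * (ηs - η1) :=
      snt_tangent Q Q' Q'' hQd hQd' hQ''neg hη1 hηs hne
    rw [hval, hb] at hA1
    rcases lt_or_ge (l * q ^ 2 - η1 ^ 2) 0 with hc | hc
    · -- c₁ < 0: tangent at η1 hits zero at x0 < 0, contradicting positivity of Q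
      have hx0 : (η1 ^ 2 - l * q ^ 2) / η1 < 0 :=
        div_neg_of_pos_of_neg (by linarith) hη1
      have hx0ne : η1 ≠ (η1 ^ 2 - l * q ^ 2) / η1 := by
        have hlq2 : 0 < l * q ^ 2 := by positivity
        have e : η1 * η1 = η1 ^ 2 := by ring
        have hlt : η1 < (η1 ^ 2 - l * q ^ 2) / η1 := by
          rw [lt_div_iff_of_neg hη1]
          linarith [hlq2, e]
        exact ne_of_lt hlt
      have hA3 : Q ((η1 ^ 2 - l * q ^ 2) / η1) <
          Q η1 + Q' η1 * ((η1 ^ 2 - l * q ^ 2) / η1 - η1) :=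
        snt_tangent Q Q' Q'' hQd hQd' hQ''neg hη1 hx0 hx0ne
      have hT0 : Q η1 + Q' η1 * ((η1 ^ 2 - l * q ^ 2) / η1 - η1) = 0 := by
        rw [hb, ← hqdef]
        field_simp [hη1.ne]
        ring
      rw [hT0] at hA3
      exact absurd (hQpos _ hx0) (by linarith)
    · -- 0 ≤ c₁ < M: algebraic contradiction
      have he2 : Q η1 + η1 / (l * q) * (ηs - η1) = (l * q ^ 2 + η1 * ηs - η1 ^ 2) / (l * q) := by
        rw [eq_div_iff hlq.ne', ← hqdef]
        field_simp
        ring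
      rw [he2] at hA1
      have hA1' : S / sl < (l * q ^ 2 + η1 * ηs - η1 ^ 2) / (l * q) := by
        have e : 1 / sl * S = S / sl := by ring
        rw [e] at hA1
        exact hA1
      have h6 : S * (l * q) < (l * q ^ 2 + η1 * ηs - η1 ^ 2) * sl :=
        (div_lt_div_iff₀ hslpos hlq).mp hA1'
      have h7 := mul_self_lt_mul_self (by positivity : (0:ℝ) ≤ S * (l * q)) h6
      have h8 : (ηs ^ 2 + M) * ((l * q) * (l * q)) <
          ((l * q ^ 2 + η1 * ηs - η1 ^ 2) * (l * q ^ 2 + η1 * ηs - η1 ^ 2)) * l := by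
        calc (ηs ^ 2 + M) * ((l * q) * (l * q))
            = (S * (l * q)) * (S * (l * q)) := by rw [← hS2]; ring
          _ < ((l * q ^ 2 + η1 * ηs - η1 ^ 2) * sl) * ((l * q ^ 2 + η1 * ηs - η1 ^ 2) * sl) := h7
          _ = ((l * q ^ 2 + η1 * ηs - η1 ^ 2) * (l * q ^ 2 + η1 * ηs - η1 ^ 2)) * l := by
              rw [← hsl2]; ring
      have hsq2 : (ηs ^ 2 + M) * (l * q ^ 2) < (l * q ^ 2 + η1 * ηs - η1 ^ 2) ^ 2 := by
        have h9 : l * ((ηs ^ 2 + M) * (l * q ^ 2)) <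
            l * ((l * q ^ 2 + η1 * ηs - η1 ^ 2) ^ 2) := by
          calc l * ((ηs ^ 2 + M) * (l * q ^ 2)) = (ηs ^ 2 + M) * ((l * q) * (l * q)) := by ring
            _ < ((l * q ^ 2 + η1 * ηs - η1 ^ 2) * (l * q ^ 2 + η1 * ηs - η1 ^ 2)) * l := h8
            _ = l * ((l * q ^ 2 + η1 * ηs - η1 ^ 2) ^ 2) := by ring
        exact lt_of_mul_lt_mul_left h9 hlpos.le
      have p1 : 0 ≤ (l * q ^ 2 - η1 ^ 2) * (M - (l * q ^ 2 - η1 ^ 2)) :=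
        mul_nonneg hc (by linarith)
      have hη1sq : 0 < η1 ^ 2 := by
        have := mul_pos_of_neg_of_neg hη1 hη1
        have e : η1 * η1 = η1 ^ 2 := by ring
        linarith
      have p2 : 0 < (M - (l * q ^ 2 - η1 ^ 2)) * η1 ^ 2 :=
        mul_pos (by linarith) hη1sq
      have p3 : 0 ≤ (l * q ^ 2 - η1 ^ 2) * (η1 - ηs) ^ 2 :=
        mul_nonneg hc (sq_nonneg _)
      have hid : (l * q ^ 2 + η1 * ηs - η1 ^ 2) ^ 2 - (ηs ^ 2 + M) * (l * q ^ 2) =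
          -((l * q ^ 2 - η1 ^ 2) * (M - (l * q ^ 2 - η1 ^ 2))
            + (M - (l * q ^ 2 - η1 ^ 2)) * η1 ^ 2
            + (l * q ^ 2 - η1 ^ 2) * (η1 - ηs) ^ 2) := by ring
      linarith [hsq2, p1, p2, p3, hid]
  refine ⟨?_, ⟨hroot_s, key⟩, ?_⟩
  · -- uniqueness of the tangency point
    intro η1 δ1 hη1 hδ1 hv1 hd1
    have hS1 : 0 < Real.sqrt (η1 ^ 2 + δ1 * (l - 1)) := Real.sqrt_pos.2 (by positivity)
    have hroot1 : l * Q η1 * Q' η1 = η1 := by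
      rw [hv1, hd1]
      exact snt_rootid l sl (Real.sqrt (η1 ^ 2 + δ1 * (l - 1))) η1 hslpos.ne' hS1.ne' hsl2
    have hη : η1 = ηs := key η1 hη1 hroot1
    subst hη
    refine ⟨rfl, ?_⟩
    have hvv : Real.sqrt (η1 ^ 2 + δ1 * (l - 1)) = S := by
      have h1 : 1 / sl * Real.sqrt (η1 ^ 2 + δ1 * (l - 1)) = 1 / sl * S := hv1.symm.trans hval
      exact mul_left_cancel₀ (one_div_ne_zero hslpos.ne') h1
    have h2 := congrArg (fun x : ℝ => x ^ 2) hvv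
    rw [Real.sq_sqrt (by positivity : (0:ℝ) ≤ η1 ^ 2 + δ1 * (l - 1)), hS2'] at h2
    have h3 : δ1 * (l - 1) = δs * (l - 1) := by linarith
    exact mul_right_cancel₀ hl1.ne' h3
  · -- the value of δs
    have e1 : l * Q ηs ^ 2 = ηs ^ 2 + δs * (l - 1) := by
      rw [hval, snt_sq l sl S hslpos.ne' hsl2, hS2']
    rw [e1]
    field_simp
    ring
end

section
/- Consider the Riccati system ẋ = 1, ẏ = x + y² with return map Q₀(x₀) = x₀ + t(x₀) for x₀ < 0, and define f(x₀) = u² - 2xu + x²v evaluated at (t(x₀), x₀), where u,v are the first and second variational solutions. Then f'(x₀) = x(t(x₀),x₀)² · (dv/dx₀)(t(x₀),x₀); i.e. in the total derivative of f along the return time, all terms except the one coming from the derivative of v cancel. -/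
open Real Set

/-- Riccati system ẋ = 1, ẏ = x + y²: the total derivative of
`f(x₀) = u² - 2xu + x²v` evaluated at `(t(x₀),x₀)` is
`f'(x₀) = x(t(x₀),x₀)² · (d/dx₀)[v(t(x₀),x₀)]`: all other terms cancel. -/
theorem riccati_f_derivative
    (y u v : ℝ → ℝ → ℝ) (t : ℝ → ℝ) (x₀ t' Vd : ℝ) (hx₀ : x₀ < 0)
    (hret : y (t x₀) x₀ = 0)
    (hxpos : 0 < t x₀ + x₀)
    (ht'val : t' = -(u (t x₀) x₀) / (t x₀ + x₀))
    (ht : HasDerivAt t t' x₀)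
    (hU : HasDerivAt (fun z => u (t z) z)
      ((1 + 2 * y (t x₀) x₀ * u (t x₀) x₀) * t' + v (t x₀) x₀) x₀)
    (hV : HasDerivAt (fun z => v (t z) z) Vd x₀) :
    HasDerivAt (fun z => (u (t z) z)^2 - 2 * (t z + z) * u (t z) z
        + (t z + z)^2 * v (t z) z)
      ((t x₀ + x₀)^2 * Vd) x₀ := by
  have hXne : t x₀ + x₀ ≠ 0 := ne_of_gt hxpos
  have hX : HasDerivAt (fun z => t z + z) (t' + 1) x₀ := ht.add (hasDerivAt_id x₀)
  have h1 := hU.pow 2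
  have h2 := ((hX.const_mul (2:ℝ)).mul hU)
  have h3 := (hX.pow 2).mul hV
  have h := (h1.sub h2).add h3
  convert h using 1
  · rfl
  · rfl
  · rfl
  rw [hret, ht'val]
  simp only [Pi.pow_apply]
  field_simp
  ring
end
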